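/- There is an absolute constant D > 0 such that for every H ∈ (0,1), every t ∈ (0,1] and every integer j ≥ 0, the function φ_t(s) = (t + s)^{H − 1/2} on [0,1] satisfies ∑_{k=0}^{2^j − 1} ⟨φ_t, ℋ_{2^j + k}⟩² ≤ D · 2^{−2jH} · ∑_{ℓ=1}^∞ ℓ^{2H − 3}. -/

import Mathlib

open MeasureTheory ProbabilityTheory Real Filter
open intervalIntegral NNReal

noncomputable section

/-- The mother Haar wavelet: 1 on [0,1/2), -1 on [1/2,1], 0 otherwise. -/
def haarMother (s : ℝ) : ℝ :=
  if s ∈ Set.Ico (0 : ℝ) (1/2) then 1 else if s ∈ Set.Icc (1/2 : ℝ) 1 then -1 else 0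

/-- The Haar orthonormal basis of L²[0,1]: `haarFun 0 = 1` on `[0,1]`, and for
`n = 2^j + k` with `0 ≤ k < 2^j`, `haarFun n s = 2^(j/2) * haarMother (2^j * s - k)`. -/
def haarFun (n : ℕ) (s : ℝ) : ℝ :=
  if n = 0 then (if s ∈ Set.Icc (0 : ℝ) 1 then 1 else 0)
  else (2 : ℝ) ^ ((Nat.log2 n : ℝ) / 2) *
    haarMother ((2 : ℝ) ^ (Nat.log2 n : ℕ) * s - ((n - 2 ^ Nat.log2 n : ℕ) : ℝ))

/-- Inner product on L²[0,1]. -/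
def innerUnit (f g : ℝ → ℝ) : ℝ := ∫ s in (0 : ℝ)..1, f s * g s

/-- Inner product on L²[-1,0]. -/
def innerNeg (f g : ℝ → ℝ) : ℝ := ∫ s in (-1 : ℝ)..0, f s * g s

/-- The Haar orthonormal basis of L²[-1,0]. -/
def haarFunNeg (n : ℕ) (s : ℝ) : ℝ := haarFun n (s + 1)

/-- `f_t^{(1)}(s) = (t-s)^(H-1/2)` for `s ∈ [0,t)`, `0` otherwise. -/
def f1 (H t : ℝ) (s : ℝ) : ℝ := if 0 ≤ s ∧ s < t then (t - s) ^ (H - 1/2) else 0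

/-- `f_t^{(2)}(s) = (t-s)^(H-1/2) - (-s)^(H-1/2)` for `s ∈ [-1,0)`, `0` otherwise. -/
def f2 (H t : ℝ) (s : ℝ) : ℝ :=
  if -1 ≤ s ∧ s < 0 then (t - s) ^ (H - 1/2) - (-s) ^ (H - 1/2) else 0

/-- Haar coefficient `⟨f_t^{(1)}, ℋ_n⟩`. -/
def coeff1 (H t : ℝ) (n : ℕ) : ℝ := innerUnit (f1 H t) (haarFun n)

/-- Haar coefficient `⟨f_t^{(2)}, ℋ̃_n⟩`. -/
def coeff2 (H t : ℝ) (n : ℕ) : ℝ := innerNeg (f2 H t) (haarFunNeg n)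

/-- `g_n(t,H) = ∫₀¹ ((t + 1/x)^(H-3/2) - (1/x)^(H-3/2)) x⁻³ (∫₀ˣ ℋ_n(y) dy) dx`. -/
def gCoeff (H t : ℝ) (n : ℕ) : ℝ :=
  ∫ x in (0 : ℝ)..1,
    ((t + x⁻¹) ^ (H - 3/2) - (x⁻¹) ^ (H - 3/2)) * (x⁻¹) ^ (3 : ℕ) *
      (∫ y in (0 : ℝ)..x, haarFun n y)

/-- `C_H = 1/Γ(H + 1/2)`. -/
def CH (H : ℝ) : ℝ := 1 / Real.Gamma (H + 1/2)

lemma haarFun_eq (j k : ℕ) (hk : k < 2 ^ j) (s : ℝ) :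
    haarFun (2 ^ j + k) s =
      (2:ℝ) ^ ((j:ℝ)/2) * haarMother ((2:ℝ) ^ j * s - k) := by
  have hn : 2 ^ j + k ≠ 0 := by positivity
  have hlog : Nat.log2 (2 ^ j + k) = j := by
    rw [Nat.log2_eq_log_two]
    exact Nat.log_eq_of_pow_le_of_lt_pow (Nat.le_add_right _ _) (by rw [pow_succ]; omega)
  rw [haarFun, if_neg hn, hlog]
  norm_num

lemma aux_rpow_diff {b a p : ℝ} (hb : 0 < b) (hab : b ≤ a) (hp : p ≤ 1) :
    |a ^ p - b ^ p| ≤ |p| * ((a - b) * b ^ (p - 1)) := by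
  rcases eq_or_ne p 0 with rfl | hp0
  · simp
  have hne : p - 1 ≠ -1 := by intro h; apply hp0; linarith
  have h0 : (0:ℝ) ∉ Set.uIcc b a := by
    rw [Set.uIcc_of_le hab]; rintro ⟨h1, -⟩; linarith
  have hint : (∫ x in b..a, x ^ (p - 1)) = (a ^ p - b ^ p) / p := by
    rw [integral_rpow (Or.inr ⟨hne, h0⟩)]
    norm_num
  have hbd : |∫ x in b..a, x ^ (p - 1)| ≤ b ^ (p - 1) * |a - b| := by
    have := intervalIntegral.norm_integral_le_of_norm_le_const
      (C := b ^ (p - 1)) (f := fun x : ℝ => x ^ (p - 1)) (a := b) (b := a) ?_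
    · simpa using this
    · intro x hx
      rw [Set.uIoc_of_le hab] at hx
      have hx0 : 0 < x := hb.trans hx.1
      rw [Real.norm_eq_abs, abs_of_nonneg (Real.rpow_nonneg hx0.le _)]
      exact Real.rpow_le_rpow_of_nonpos hb hx.1.le (by linarith)
  have heq : a ^ p - b ^ p = p * ∫ x in b..a, x ^ (p - 1) := by
    rw [hint]; field_simp
  rw [heq, abs_mul]
  calc |p| * |∫ x in b..a, x ^ (p - 1)| ≤ |p| * (b ^ (p-1) * |a - b|) :=
        mul_le_mul_of_nonneg_left hbd (abs_nonneg p)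
    _ = |p| * ((a - b) * b ^ (p - 1)) := by
        rw [abs_of_nonneg (by linarith : (0:ℝ) ≤ a - b)]; ring

lemma aux_rpow_subadd {x h p : ℝ} (hx : 0 ≤ x) (hh : 0 ≤ h) (hp0 : 0 ≤ p) (hp1 : p ≤ 1) :
    (x + h) ^ p ≤ x ^ p + h ^ p := by
  have key := NNReal.rpow_add_le_add_rpow (x.toNNReal) (h.toNNReal) hp0 hp1
  have := (NNReal.coe_le_coe).mpr key
  push_cast [NNReal.coe_rpow] at this
  rwa [Real.coe_toNNReal x hx, Real.coe_toNNReal h hh] at this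

lemma two_rpow_neg_two : (2:ℝ) ^ (-2:ℝ) = 1/4 := by
  rw [show (-2:ℝ) = ((-2:ℤ):ℝ) by norm_num, Real.rpow_intCast]; norm_num

set_option maxHeartbeats 4000000 in
lemma coeff_bound {H t : ℝ} (hH : H ∈ Set.Ioo (0:ℝ) 1) (ht : t ∈ Set.Ioc (0:ℝ) 1)
    (j k : ℕ) (hk : k < 2 ^ j) :
    |innerUnit (fun s => (t + s) ^ (H - 1/2)) (haarFun (2 ^ j + k))|
      ≤ 2 * ((2:ℝ) ^ (-(j:ℝ) * H) * ((k:ℝ) + 1) ^ (H - 3/2)) := by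
  obtain ⟨hH0, hH1⟩ := hH; obtain ⟨ht0, ht1⟩ := ht
  set p := H - 1/2 with hpdef
  set φ : ℝ → ℝ := fun s => (t + s) ^ p with hφdef
  set q : ℝ := (2:ℝ) ^ j with hqdef
  have hq : 0 < q := by positivity
  set c : ℝ := (2:ℝ) ^ ((j:ℝ)/2) with hcdef
  have hc : 0 < c := by positivity
  set h : ℝ := 1 / (2 * q) with hhdef
  have hh : 0 < h := by positivity
  set l : ℝ := k / q with hldef
  have hl0 : 0 ≤ l := by positivity
  have hkq : (k:ℝ) + 1 ≤ q := by
    rw [hqdef]; exact_mod_cast Nat.succ_le_of_lt hk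
  have hql : q * l = k := by rw [hldef, mul_div_cancel₀ _ hq.ne']
  have hqh : q * h = 1/2 := by rw [hhdef]; field_simp
  have hq2h : q * (2*h) = 1 := by rw [mul_left_comm, hqh]; ring
  have hr1 : l + 2*h ≤ 1 := by
    have : q * (l + 2*h) ≤ q * 1 := by rw [mul_add, hql, hq2h, mul_one]; linarith
    exact (mul_le_mul_iff_right₀ hq).mp this
  have hm1 : l + h ≤ 1 := by linarith
  have hlm : l ≤ l + h := by linarith
  -- continuity of φ on [0,∞)
  have hφc : ContinuousOn φ (Set.Ici 0) := by
    apply ContinuousOn.rpow_const (by fun_prop)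
    intro s hs
    exact Or.inl (by simp only [Set.mem_Ici] at hs; positivity)
  have hφc' : ContinuousOn (fun s => φ (s + h)) (Set.Ici 0) := by
    apply ContinuousOn.rpow_const (by fun_prop)
    intro s hs
    simp only [Set.mem_Ici] at hs
    exact Or.inl (by positivity)
  -- pointwise identity
  have hkey : ∀ s : ℝ, φ s * haarMother (q * s - k) =
      (Set.Ico l (l+h)).indicator φ s - (Set.Icc (l+h) (l+2*h)).indicator φ s := by
    intro s
    have e1 : (q * s - k ∈ Set.Ico (0:ℝ) (1/2)) ↔ s ∈ Set.Ico l (l+h) := by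
      rw [Set.mem_Ico, Set.mem_Ico]
      constructor
      · rintro ⟨h1, h2⟩
        constructor
        · exact (mul_le_mul_iff_right₀ hq).mp (by linarith)
        · exact (mul_lt_mul_iff_right₀ hq).mp (by rw [mul_add, hql, hqh]; linarith)
      · rintro ⟨h1, h2⟩
        have g1 := (mul_le_mul_iff_right₀ hq).mpr h1
        have g2 := (mul_lt_mul_iff_right₀ hq).mpr h2
        rw [hql] at g1
        rw [mul_add, hql, hqh] at g2
        constructor <;> linarith
    have e2 : (q * s - k ∈ Set.Icc (1/2 : ℝ) 1) ↔ s ∈ Set.Icc (l+h) (l+2*h) := by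
      rw [Set.mem_Icc, Set.mem_Icc]
      constructor
      · rintro ⟨h1, h2⟩
        constructor
        · exact (mul_le_mul_iff_right₀ hq).mp (by rw [mul_add, hql, hqh]; linarith)
        · exact (mul_le_mul_iff_right₀ hq).mp (by rw [mul_add, hql, hq2h]; linarith)
      · rintro ⟨h1, h2⟩
        have g1 := (mul_le_mul_iff_right₀ hq).mpr h1
        have g2 := (mul_le_mul_iff_right₀ hq).mpr h2
        rw [mul_add, hql, hqh] at g1
        rw [mul_add, hql, hq2h] at g2
        constructor <;> linarith
    rw [haarMother]
    by_cases c1 : s ∈ Set.Ico l (l+h)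
    · rw [if_pos (e1.mpr c1), Set.indicator_of_mem c1,
        Set.indicator_of_notMem (by
          rw [Set.mem_Icc]; push_neg; intro hcon; exfalso
          exact absurd c1.2 (not_lt.mpr hcon))]
      ring
    · by_cases c2 : s ∈ Set.Icc (l+h) (l+2*h)
      · rw [if_neg (fun hmem => c1 (e1.mp hmem)), if_pos (e2.mpr c2),
          Set.indicator_of_notMem c1, Set.indicator_of_mem c2]
        ring
      · rw [if_neg (fun hmem => c1 (e1.mp hmem)), if_neg (fun hmem => c2 (e2.mp hmem)),
          Set.indicator_of_notMem c1, Set.indicator_of_notMem c2]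
        ring
  -- integrability of the indicators
  have hsub01 : Set.Icc (0:ℝ) 1 ⊆ Set.Ici 0 := fun x hx => hx.1
  have hφInt01 : IntegrableOn φ (Set.Ioc 0 1) volume :=
    ((hφc.mono hsub01).integrableOn_Icc).mono_set Set.Ioc_subset_Icc_self
  have hind1 : IntervalIntegrable ((Set.Ico l (l+h)).indicator φ) volume 0 1 := by
    rw [intervalIntegrable_iff_integrableOn_Ioc_of_le zero_le_one]
    exact hφInt01.indicator measurableSet_Ico
  have hind2 : IntervalIntegrable ((Set.Icc (l+h) (l+2*h)).indicator φ) volume 0 1 := by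
    rw [intervalIntegrable_iff_integrableOn_Ioc_of_le zero_le_one]
    exact hφInt01.indicator measurableSet_Icc
  have hIoc1 : (Set.Ioc (0:ℝ) 1 ∩ Set.Ico l (l+h) : Set ℝ) =ᵐ[volume] (Set.Ioc l (l+h) : Set ℝ) := by
    have h1 : Set.Ico l (l+h) =ᵐ[volume] Set.Ioc l (l+h) := Ico_ae_eq_Ioc
    refine (MeasureTheory.ae_eq_set_inter (Filter.EventuallyEq.refl _ _) h1).trans ?_
    rw [Set.inter_eq_right.mpr (Set.Ioc_subset_Ioc hl0 hm1)]
    exact Filter.EventuallyEq.rfl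
  have hIoc2 : (Set.Ioc (0:ℝ) 1 ∩ Set.Icc (l+h) (l+2*h) : Set ℝ) =ᵐ[volume] (Set.Ioc (l+h) (l+2*h) : Set ℝ) := by
    have h1 : Set.Icc (l+h) (l+2*h) =ᵐ[volume] Set.Ioc (l+h) (l+2*h) := Ioc_ae_eq_Icc.symm
    refine (MeasureTheory.ae_eq_set_inter (Filter.EventuallyEq.refl _ _) h1).trans ?_
    rw [Set.inter_eq_right.mpr (Set.Ioc_subset_Ioc (show (0:ℝ) ≤ l + h by linarith) hr1)]
    exact Filter.EventuallyEq.rfl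
  have step1 : innerUnit φ (haarFun (2^j+k))
      = c * ((∫ s in l..(l+h), φ s) - ∫ s in (l+h)..(l+2*h), φ s) := by
    rw [innerUnit]
    have e : ∀ s : ℝ, φ s * haarFun (2^j+k) s
        = c * ((Set.Ico l (l+h)).indicator φ s - (Set.Icc (l+h) (l+2*h)).indicator φ s) := by
      intro s
      rw [haarFun_eq j k hk s, ← hqdef, ← hcdef, ← hkey s]; ring
    simp_rw [e]
    rw [intervalIntegral.integral_const_mul]
    congr 1
    rw [intervalIntegral.integral_sub hind1 hind2]
    congr 1
    · rw [intervalIntegral.integral_of_le zero_le_one,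
        MeasureTheory.setIntegral_indicator measurableSet_Ico,
        MeasureTheory.setIntegral_congr_set hIoc1, intervalIntegral.integral_of_le hlm]
    · rw [intervalIntegral.integral_of_le zero_le_one,
        MeasureTheory.setIntegral_indicator measurableSet_Icc,
        MeasureTheory.setIntegral_congr_set hIoc2,
        intervalIntegral.integral_of_le (by linarith : l + h ≤ l + 2*h)]
  have step2 : (∫ s in l..(l+h), φ (s + h)) = ∫ s in (l+h)..(l+2*h), φ s := by
    rw [intervalIntegral.integral_comp_add_right φ h]
    have : l + h + h = l + 2*h := by ring
    rw [this]
  have hφint1 : IntervalIntegrable φ volume l (l+h) := by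
    apply (hφc.mono ?_).intervalIntegrable
    rw [Set.uIcc_of_le hlm]
    intro x hx
    exact le_trans hl0 hx.1
  have hφint2 : IntervalIntegrable (fun s => φ (s+h)) volume l (l+h) := by
    apply (hφc'.mono ?_).intervalIntegrable
    rw [Set.uIcc_of_le hlm]
    intro x hx
    exact le_trans hl0 hx.1
  have step3 : innerUnit φ (haarFun (2^j+k)) = c * ∫ s in l..(l+h), (φ s - φ (s+h)) := by
    rw [step1, ← step2, ← intervalIntegral.integral_sub hφint1 hφint2]
  rw [step3, abs_mul, abs_of_pos hc]
  -- two-power bookkeeping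
  have e_q : q = (2:ℝ) ^ (j:ℝ) := by rw [hqdef, Real.rpow_natCast]
  have e_h : h = (2:ℝ) ^ (-(j:ℝ) - 1) := by
    rw [hhdef, e_q, Real.rpow_sub two_pos, Real.rpow_one, Real.rpow_neg two_pos.le]
    field_simp
  have habs_p : |p| ≤ 1/2 := by
    rw [abs_le]
    constructor <;> rw [hpdef] <;> linarith
  have htwo : (0:ℝ) < 2 := two_pos
  rcases Nat.eq_zero_or_pos k with hk0 | hkpos
  · -- k = 0 case
    subst hk0
    have hl00 : l = 0 := by rw [hldef]; simp
    have hone : (((0:ℕ):ℝ) + 1) ^ (H - 3/2) = 1 := by norm_num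
    rw [hone, mul_one]
    by_cases hp0 : 0 ≤ p
    · -- H ≥ 1/2
      have hCbd : ∀ s ∈ Set.uIoc l (l+h), ‖φ s - φ (s+h)‖ ≤ h ^ p := by
        intro s hs
        rw [Set.uIoc_of_le hlm] at hs
        have hs0 : 0 ≤ s := le_trans hl0 hs.1.le
        have hmono : φ s ≤ φ (s+h) := by
          simp only [hφdef]
          exact Real.rpow_le_rpow (by linarith) (by linarith) hp0
        have hsub : φ (s+h) ≤ φ s + h ^ p := by
          have hsa := aux_rpow_subadd (x := t+s) (h := h) (p := p)
            (by linarith) hh.le hp0 (by rw [hpdef]; linarith)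
          have e1 : φ (s+h) = (t+s+h) ^ p := by simp only [hφdef]; congr 1; ring
          have e2 : φ s = (t+s) ^ p := rfl
          rw [e1, e2]
          exact hsa
        rw [Real.norm_eq_abs, abs_sub_comm, abs_of_nonneg (by linarith)]
        linarith
      have hIb := intervalIntegral.norm_integral_le_of_norm_le_const hCbd
      rw [Real.norm_eq_abs, show |l + h - l| = h from by
        rw [add_sub_cancel_left, abs_of_pos hh]] at hIb
      have hnum : c * (h ^ p * h) ≤ 2 * (2:ℝ) ^ (-(j:ℝ) * H) := by
        have e_hp : h ^ p = (2:ℝ) ^ ((-(j:ℝ) - 1) * p) := by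
          rw [e_h, ← Real.rpow_mul htwo.le]
        have key : c * (h ^ p * h) = (2:ℝ) ^ ((j:ℝ)/2 + ((-(j:ℝ)-1)*p + (-(j:ℝ)-1))) := by
          rw [e_hp, e_h, hcdef, ← Real.rpow_add htwo, ← Real.rpow_add htwo]
        rw [key]
        have hle : (j:ℝ)/2 + ((-(j:ℝ)-1)*p + (-(j:ℝ)-1)) ≤ -(j:ℝ)*H := by
          rw [hpdef]; ring_nf; nlinarith [Nat.cast_nonneg (α := ℝ) j]
        have := Real.rpow_le_rpow_of_exponent_le one_le_two hle
        nlinarith [Real.rpow_pos_of_pos htwo (-(j:ℝ)*H)]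
      calc c * |∫ s in l..l+h, (φ s - φ (s+h))|
          ≤ c * (h ^ p * h) := mul_le_mul_of_nonneg_left hIb hc.le
        _ ≤ 2 * (2:ℝ) ^ (-(j:ℝ) * H) := hnum
    · -- H < 1/2
      push_neg at hp0
      rw [hl00, zero_add]
      have hsub0 : Set.Icc (0:ℝ) h ⊆ Set.Ici 0 := fun x hx => hx.1
      have hfint : IntervalIntegrable (fun s => φ s - φ (s+h)) volume 0 h := by
        have h1 : IntervalIntegrable φ volume 0 h := by
          apply (hφc.mono ?_).intervalIntegrable
          rw [Set.uIcc_of_le hh.le]; exact hsub0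
        have h2 : IntervalIntegrable (fun s => φ (s+h)) volume 0 h := by
          apply (hφc'.mono ?_).intervalIntegrable
          rw [Set.uIcc_of_le hh.le]; exact hsub0
        exact h1.sub h2
      have hrint : IntervalIntegrable (fun s : ℝ => s ^ p) volume 0 h :=
        intervalIntegral.intervalIntegrable_rpow' (by rw [hpdef]; linarith)
      have hne0 : ∀ᵐ s : ℝ, s ≠ 0 := by
        refine MeasureTheory.ae_iff.mpr ?_
        simpa using measure_singleton (0:ℝ)
      have hub : (∫ s in (0:ℝ)..h, (φ s - φ (s+h))) ≤ ∫ s in (0:ℝ)..h, s ^ p := by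
        apply intervalIntegral.integral_mono_ae_restrict hh.le hfint hrint
        have hae : ∀ᵐ s ∂(volume.restrict (Set.Icc (0:ℝ) h)), φ s - φ (s+h) ≤ s ^ p := by
          rw [MeasureTheory.ae_restrict_iff' measurableSet_Icc]
          filter_upwards [hne0] with s hs hsIcc
          have hs0 : 0 < s := lt_of_le_of_ne hsIcc.1 (Ne.symm hs)
          have h1 : φ s ≤ s ^ p := by
            simp only [hφdef]
            exact Real.rpow_le_rpow_of_nonpos hs0 (by linarith) hp0.le
          have h2 : 0 ≤ φ (s+h) := by
            simp only [hφdef]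
            exact Real.rpow_nonneg (by linarith) _
          linarith
        exact hae
      have hnn : 0 ≤ ∫ s in (0:ℝ)..h, (φ s - φ (s+h)) := by
        apply intervalIntegral.integral_nonneg hh.le
        intro u hu
        have hu0 : 0 ≤ u := hu.1
        have hle : φ (u+h) ≤ φ u := by
          simp only [hφdef]
          exact Real.rpow_le_rpow_of_nonpos (by linarith) (by linarith) hp0.le
        linarith
      have hval : (∫ s in (0:ℝ)..h, s ^ p) = h ^ (p+1) / (p+1) := by
        rw [integral_rpow (Or.inl (by rw [hpdef]; linarith))]
        rw [Real.zero_rpow (by rw [hpdef]; intro hcon; norm_num at hcon; linarith)]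
        ring
      have hp1 : (0:ℝ) < p + 1 := by rw [hpdef]; linarith
      have hp1' : (1:ℝ)/2 ≤ p + 1 := by rw [hpdef]; linarith
      have habs2 : |∫ s in (0:ℝ)..h, (φ s - φ (s+h))| ≤ 2 * h ^ (p+1) := by
        rw [abs_of_nonneg hnn]
        have h1 : h ^ (p+1) / (p+1) ≤ 2 * h ^ (p+1) := by
          rw [div_le_iff₀ hp1]
          nlinarith [mul_nonneg (Real.rpow_nonneg hh.le (p+1)) (by rw [hpdef]; linarith : (0:ℝ) ≤ 2*(p+1) - 1)]
        rw [hval] at hub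
        linarith
      have hnum : c * (2 * h ^ (p+1)) ≤ 2 * (2:ℝ) ^ (-(j:ℝ) * H) := by
        have e1 : c * h ^ (p+1) = (2:ℝ) ^ ((j:ℝ)/2 + (-(j:ℝ)-1)*(p+1)) := by
          rw [e_h, hcdef, ← Real.rpow_mul htwo.le, ← Real.rpow_add htwo]
        have hle : (j:ℝ)/2 + (-(j:ℝ)-1)*(p+1) ≤ -(j:ℝ)*H := by
          rw [hpdef]; ring_nf; nlinarith [Nat.cast_nonneg (α := ℝ) j]
        have h2 := Real.rpow_le_rpow_of_exponent_le one_le_two hle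
        calc c * (2 * h ^ (p+1)) = 2 * (c * h ^ (p+1)) := by ring
          _ = 2 * (2:ℝ) ^ ((j:ℝ)/2 + (-(j:ℝ)-1)*(p+1)) := by rw [e1]
          _ ≤ 2 * (2:ℝ) ^ (-(j:ℝ) * H) := by linarith
      calc c * |∫ s in (0:ℝ)..h, (φ s - φ (s+h))|
          ≤ c * (2 * h ^ (p+1)) := mul_le_mul_of_nonneg_left habs2 hc.le
        _ ≤ 2 * (2:ℝ) ^ (-(j:ℝ) * H) := hnum
  · -- k ≥ 1 case
    have hk1 : (1:ℝ) ≤ (k:ℝ) := by exact_mod_cast hkpos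
    have hlpos : 0 < l := by
      rw [hldef]
      apply div_pos (by exact_mod_cast hkpos) hq
    have hCbd : ∀ s ∈ Set.uIoc l (l+h), ‖φ s - φ (s+h)‖ ≤ 1/2 * (h * l ^ (p-1)) := by
      intro s hs
      rw [Set.uIoc_of_le hlm] at hs
      have hls : l < s := hs.1
      have hb0 : 0 < t + s := by linarith
      have hd := aux_rpow_diff (b := t+s) (a := t+s+h) (p := p) hb0 (by linarith)
        (by rw [hpdef]; linarith)
      have e1 : φ (s+h) = (t+s+h) ^ p := by simp only [hφdef]; congr 1; ring
      have e2 : φ s = (t+s) ^ p := rfl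
      rw [Real.norm_eq_abs, abs_sub_comm, e1, e2]
      have e3 : t+s+h - (t+s) = h := by ring
      rw [e3] at hd
      refine hd.trans ?_
      have hbl : (t+s) ^ (p-1) ≤ l ^ (p-1) :=
        Real.rpow_le_rpow_of_nonpos hlpos (by linarith) (by rw [hpdef]; linarith)
      have hfac : h * (t+s)^(p-1) ≤ h * l^(p-1) := mul_le_mul_of_nonneg_left hbl hh.le
      apply mul_le_mul habs_p hfac (by positivity) (by norm_num)
    have hIb := intervalIntegral.norm_integral_le_of_norm_le_const hCbd
    rw [Real.norm_eq_abs, show |l + h - l| = h from by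
      rw [add_sub_cancel_left, abs_of_pos hh]] at hIb
    have hmain : c * (1/2 * (h * l ^ (p-1)) * h)
        = (2:ℝ)^(-(j:ℝ)*H - 3) * (k:ℝ)^(p-1) := by
      have e_l : l ^ (p-1) = (k:ℝ)^(p-1) * (2:ℝ)^(-(j:ℝ)*(p-1)) := by
        rw [hldef, Real.div_rpow (Nat.cast_nonneg k) hq.le, e_q, ← Real.rpow_mul htwo.le,
          div_eq_mul_inv, ← Real.rpow_neg htwo.le, neg_mul]
      rw [e_l]
      rw [show c * (1/2 * (h * ((k:ℝ)^(p-1) * (2:ℝ)^(-(j:ℝ)*(p-1)))) * h)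
          = (c * h * h * (2:ℝ)^(-(j:ℝ)*(p-1)) * (1/2)) * (k:ℝ)^(p-1) from by ring]
      congr 1
      rw [hcdef, e_h, show (1:ℝ)/2 = (2:ℝ)^(-1:ℝ) from by rw [Real.rpow_neg_one]; norm_num]
      rw [← Real.rpow_add htwo, ← Real.rpow_add htwo, ← Real.rpow_add htwo,
        ← Real.rpow_add htwo]
      congr 1
      rw [hpdef]; ring
    have hp13 : p - 1 = H - 3/2 := by rw [hpdef]; ring
    have e2 : (2:ℝ)^(-(j:ℝ)*H - 3) = (2:ℝ)^(-(j:ℝ)*H) * (1/8) := by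
      rw [Real.rpow_sub htwo]
      congr 1
      rw [show (3:ℝ) = ((3:ℕ):ℝ) from by norm_num, Real.rpow_natCast]
      norm_num
      ring
    have hk4 : (k:ℝ)^(H-3/2) ≤ 4 * ((k:ℝ)+1)^(H-3/2) := by
      have h2k : (k:ℝ) + 1 ≤ 2*(k:ℝ) := by linarith
      have hs1 : (2*(k:ℝ))^(H-3/2) ≤ ((k:ℝ)+1)^(H-3/2) :=
        Real.rpow_le_rpow_of_nonpos (by linarith) h2k (by linarith)
      have hs2 : (2*(k:ℝ))^(H-3/2) = (2:ℝ)^(H-3/2) * (k:ℝ)^(H-3/2) :=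
        Real.mul_rpow (by norm_num) (by positivity)
      have hs3 : (1/4:ℝ) ≤ (2:ℝ)^(H-3/2) := by
        rw [← two_rpow_neg_two]
        exact Real.rpow_le_rpow_of_exponent_le one_le_two (by linarith)
      nlinarith [Real.rpow_nonneg (Nat.cast_nonneg (α := ℝ) k) (H-3/2)]
    calc c * |∫ s in l..l+h, (φ s - φ (s+h))|
        ≤ c * (1/2 * (h * l ^ (p-1)) * h) := mul_le_mul_of_nonneg_left hIb hc.le
      _ = (2:ℝ)^(-(j:ℝ)*H - 3) * (k:ℝ)^(p-1) := hmain
      _ ≤ 2 * ((2:ℝ)^(-(j:ℝ)*H) * ((k:ℝ)+1)^(H-3/2)) := by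
          rw [e2, hp13]
          have hA := Real.rpow_pos_of_pos htwo (-(j:ℝ)*H)
          have hAY := mul_le_mul_of_nonneg_left hk4 hA.le
          nlinarith [Real.rpow_nonneg (by positivity : (0:ℝ) ≤ (k:ℝ)+1) (H-3/2)]

lemma summable_shift (H : ℝ) (hH0 : 0 < H) (hH1 : H < 1) :
    Summable (fun ℓ : ℕ => ((ℓ:ℝ) + 1) ^ (2*H - 3)) := by
  have h1 : Summable (fun n : ℕ => ((n:ℝ)) ^ (2*H - 3)) :=
    Real.summable_nat_rpow.mpr (by linarith)
  have h2 := (_root_.summable_nat_add_iff 1).mpr h1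
  exact h2.congr (fun n => by push_cast; ring_nf)


theorem stmt14 :
    ∃ D : ℝ, 0 < D ∧
      ∀ H : ℝ, H ∈ Set.Ioo (0 : ℝ) 1 →
      ∀ t : ℝ, t ∈ Set.Ioc (0 : ℝ) 1 →
      ∀ j : ℕ,
        (∑ k ∈ Finset.range (2 ^ j),
            (innerUnit (fun s => (t + s) ^ (H - 1/2)) (haarFun (2 ^ j + k))) ^ 2)
          ≤ D * (2 : ℝ) ^ (-(2 * (j : ℝ) * H)) * ∑' ℓ : ℕ, ((ℓ : ℝ) + 1) ^ (2 * H - 3) := by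
  refine ⟨4, by norm_num, ?_⟩
  intro H hH t ht j
  obtain ⟨hH0, hH1⟩ := hH
  have hsum := summable_shift H hH0 hH1
  calc (∑ k ∈ Finset.range (2 ^ j),
          (innerUnit (fun s => (t + s) ^ (H - 1/2)) (haarFun (2 ^ j + k))) ^ 2)
      ≤ ∑ k ∈ Finset.range (2 ^ j),
          (2 * ((2:ℝ) ^ (-(j:ℝ) * H) * ((k:ℝ) + 1) ^ (H - 3/2))) ^ 2 := by
        apply Finset.sum_le_sum
        intro k hk
        have hb := coeff_bound ⟨hH0, hH1⟩ ht j k (Finset.mem_range.mp hk)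
        calc (innerUnit (fun s => (t + s) ^ (H - 1/2)) (haarFun (2 ^ j + k))) ^ 2
            = |innerUnit (fun s => (t + s) ^ (H - 1/2)) (haarFun (2 ^ j + k))| ^ 2 :=
              (sq_abs _).symm
          _ ≤ (2 * ((2:ℝ) ^ (-(j:ℝ) * H) * ((k:ℝ) + 1) ^ (H - 3/2))) ^ 2 :=
              pow_le_pow_left₀ (abs_nonneg _) hb 2
    _ = 4 * (2:ℝ) ^ (-(2 * (j:ℝ) * H)) * ∑ k ∈ Finset.range (2 ^ j), ((k:ℝ)+1)^(2*H-3) := by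
        rw [Finset.mul_sum]
        apply Finset.sum_congr rfl
        intro k _
        have e1 : ((2:ℝ) ^ (-(j:ℝ) * H)) ^ (2:ℕ) = (2:ℝ) ^ (-(2 * (j:ℝ) * H)) := by
          rw [← Real.rpow_natCast ((2:ℝ) ^ (-(j:ℝ) * H)) 2, ← Real.rpow_mul two_pos.le]
          congr 1
          push_cast
          ring
        have e2 : (((k:ℝ)+1) ^ (H - 3/2)) ^ (2:ℕ) = ((k:ℝ)+1) ^ (2*H-3) := by
          rw [← Real.rpow_natCast (((k:ℝ)+1) ^ (H - 3/2)) 2, ← Real.rpow_mul (by positivity)]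
          congr 1
          push_cast
          ring
        rw [mul_pow, mul_pow, e1, e2]
        norm_num
        ring
    _ ≤ 4 * (2:ℝ) ^ (-(2 * (j:ℝ) * H)) * ∑' ℓ : ℕ, ((ℓ:ℝ) + 1) ^ (2*H - 3) := by
        apply mul_le_mul_of_nonneg_left ?_ (by positivity)
        exact Summable.sum_le_tsum _ (fun k _ => Real.rpow_nonneg (by positivity) _) hsum
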